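/- Let p be prime, r ≥ s ≥ 1, m ≥ 1 with p^r > m p^s − m. Then every sequence of p^r + m p^s − m elements of ℤ/p^sℤ contains a subsequence of length exactly p^r on which the m-th elementary symmetric polynomial vanishes mod p^s. That is, EGZ_{p^r}^{(m)}(ℤ_{p^s}) ≤ p^r + m p^s − m. -/

import Mathlib

open Finset

namespace SBaux

variable {N : ℕ}

/-- indicator of `D ⊆ S`. -/
def chi (D S : Finset (Fin N)) : ℚ := if D ⊆ S then 1 else 0

/-- `F` is a rational combination of indicators `chi D` with `D.card ≤ k`. -/
def DegLE (N k : ℕ) (F : Finset (Fin N) → ℚ) : Prop :=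
  ∃ c : Finset (Fin N) → ℚ, (∀ D, k < D.card → c D = 0) ∧
    ∀ S, F S = ∑ D : Finset (Fin N), c D * chi D S

lemma DegLE.mono {k l : ℕ} (h : k ≤ l) {F : Finset (Fin N) → ℚ} (hF : DegLE N k F) :
    DegLE N l F := by
  obtain ⟨c, hc, he⟩ := hF
  exact ⟨c, fun D hD => hc D (lt_of_le_of_lt h hD), he⟩

lemma degLE_congr {k : ℕ} {F G : Finset (Fin N) → ℚ} (h : ∀ S, F S = G S)
    (hF : DegLE N k F) : DegLE N k G := by
  obtain ⟨c, hc, he⟩ := hF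
  exact ⟨c, hc, fun S => (h S) ▸ he S⟩

lemma degLE_chi {k : ℕ} (D : Finset (Fin N)) (hD : D.card ≤ k) : DegLE N k (chi D) := by
  refine ⟨fun D' => if D' = D then 1 else 0, fun D' h => ?_, fun S => ?_⟩
  · dsimp only; rw [if_neg]; rintro rfl; omega
  · rw [Finset.sum_eq_single D (fun b _ hb => by simp [hb]) (by simp)]
    simp

lemma degLE_const {k : ℕ} (x : ℚ) : DegLE N k (fun _ => x) := by
  refine ⟨fun D => if D = ∅ then x else 0, fun D h => ?_, fun S => ?_⟩
  · dsimp only; rw [if_neg]; rintro rfl; simp at h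
  · rw [Finset.sum_eq_single ∅ (fun b _ hb => by simp [hb]) (by simp)]
    simp [chi]

lemma DegLE.add {k : ℕ} {F G : Finset (Fin N) → ℚ} (hF : DegLE N k F) (hG : DegLE N k G) :
    DegLE N k (fun S => F S + G S) := by
  obtain ⟨c, hc, hce⟩ := hF
  obtain ⟨d, hd, hde⟩ := hG
  refine ⟨fun D => c D + d D, fun D h => by dsimp only; rw [hc D h, hd D h, add_zero], fun S => ?_⟩
  simp only [hce S, hde S, add_mul, Finset.sum_add_distrib]

lemma DegLE.smul {k : ℕ} (x : ℚ) {F : Finset (Fin N) → ℚ} (hF : DegLE N k F) :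
    DegLE N k (fun S => x * F S) := by
  obtain ⟨c, hc, hce⟩ := hF
  refine ⟨fun D => x * c D, fun D h => by dsimp only; rw [hc D h, mul_zero], fun S => ?_⟩
  simp only [hce S, Finset.mul_sum, mul_assoc]

lemma chi_mul_chi (D E S : Finset (Fin N)) : chi D S * chi E S = chi (D ∪ E) S := by
  simp only [chi, union_subset_iff]
  by_cases h1 : D ⊆ S <;> by_cases h2 : E ⊆ S <;> simp [h1, h2]

lemma DegLE.mul {k l : ℕ} {F G : Finset (Fin N) → ℚ} (hF : DegLE N k F) (hG : DegLE N l G) :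
    DegLE N (k + l) (fun S => F S * G S) := by
  classical
  obtain ⟨c, hc, hce⟩ := hF
  obtain ⟨d, hd, hde⟩ := hG
  refine ⟨fun A => ∑ P ∈ (univ : Finset (Finset (Fin N) × Finset (Fin N))) with P.1 ∪ P.2 = A,
      c P.1 * d P.2, fun A hA => ?_, fun S => ?_⟩
  · apply Finset.sum_eq_zero
    intro P hP
    obtain ⟨-, hun⟩ := Finset.mem_filter.mp hP
    by_cases h1 : k < P.1.card
    · rw [hc _ h1, zero_mul]
    by_cases h2 : l < P.2.card
    · rw [hd _ h2, mul_zero]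
    exfalso
    have := Finset.card_union_le P.1 P.2
    rw [hun] at this
    omega
  · dsimp only
    rw [hce S, hde S, Finset.sum_mul_sum]
    have : ∀ A : Finset (Fin N),
        (∑ P ∈ (univ : Finset (Finset (Fin N) × Finset (Fin N))) with P.1 ∪ P.2 = A,
          c P.1 * d P.2) * chi A S
        = ∑ P ∈ (univ : Finset (Finset (Fin N) × Finset (Fin N))) with P.1 ∪ P.2 = A,
          c P.1 * chi P.1 S * (d P.2 * chi P.2 S) := by
      intro A
      rw [Finset.sum_mul]
      apply Finset.sum_congr rfl
      intro P hP
      obtain ⟨-, hun⟩ := Finset.mem_filter.mp hP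
      rw [← hun, ← chi_mul_chi]
      ring
    rw [Finset.sum_congr rfl fun A _ => this A,
      Finset.sum_fiberwise (f := fun P : Finset (Fin N) × Finset (Fin N) =>
        c P.1 * chi P.1 S * (d P.2 * chi P.2 S)) (g := fun P => P.1 ∪ P.2)]
    rw [← Finset.sum_product']
    rfl

lemma degLE_sum {ι : Type*} {k : ℕ} (t : Finset ι) (f : ι → Finset (Fin N) → ℚ)
    (h : ∀ i ∈ t, DegLE N k (f i)) : DegLE N k (fun S => ∑ i ∈ t, f i S) := by
  classical
  induction t using Finset.cons_induction with
  | empty => exact degLE_congr (by simp) (degLE_const 0)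
  | cons x t' hx ih =>
    refine degLE_congr (fun S => ?_)
      ((h x (mem_cons_self _ _)).add (ih fun i hi => h i (mem_cons_of_mem hi)))
    rw [Finset.sum_cons]

lemma degLE_prod {ι : Type*} {k : ℕ} (t : Finset ι) (f : ι → Finset (Fin N) → ℚ)
    (h : ∀ i ∈ t, DegLE N k (f i)) : DegLE N (t.card * k) (fun S => ∏ i ∈ t, f i S) := by
  classical
  induction t using Finset.cons_induction with
  | empty => exact degLE_congr (by simp) (degLE_const 1)
  | cons x t' hx ih =>
    refine degLE_congr (fun S => ?_)
      (DegLE.mono (by rw [Finset.card_cons, Nat.succ_mul, add_comm])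
        ((h x (mem_cons_self _ _)).mul (ih fun i hi => h i (mem_cons_of_mem hi))))
    rw [Finset.prod_cons]


lemma sum_chi_zero {D : Finset (Fin N)} (hD : D ≠ univ) :
    ∑ S : Finset (Fin N), (-1 : ℚ) ^ S.card * chi D S = 0 := by
  classical
  have h1 : ∑ S : Finset (Fin N), (-1 : ℚ) ^ S.card * chi D S
      = ∑ S ∈ (univ : Finset (Finset (Fin N))) with D ⊆ S, (-1 : ℚ) ^ S.card := by
    rw [Finset.sum_filter]
    apply Finset.sum_congr rfl
    intro S _
    simp only [chi, mul_ite, mul_one, mul_zero]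
  have h2 : ∑ S ∈ (univ : Finset (Finset (Fin N))) with D ⊆ S, (-1 : ℚ) ^ S.card
      = ∑ T ∈ Dᶜ.powerset, (-1 : ℚ) ^ (D ∪ T).card := by
    apply Finset.sum_nbij' (fun S => S \ D) (fun T => D ∪ T)
    · intro S hS
      simp only [Finset.mem_powerset]
      intro x hx
      simp only [Finset.mem_sdiff] at hx
      simp [Finset.mem_compl, hx.2]
    · intro T hT
      simp only [Finset.mem_filter, Finset.mem_univ, true_and]
      exact Finset.subset_union_left
    · intro S hS
      simp only [Finset.mem_filter, Finset.mem_univ, true_and] at hS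
      exact (Finset.union_sdiff_of_subset hS)
    · intro T hT
      simp only [Finset.mem_powerset] at hT
      apply Finset.union_sdiff_cancel_left
      rw [Finset.disjoint_left]
      intro x hx hxT
      exact (Finset.mem_compl.mp (hT hxT)) hx
    · intro S hS
      simp only [Finset.mem_filter, Finset.mem_univ, true_and] at hS
      rw [Finset.union_sdiff_of_subset hS]
  have hdisj : ∀ T ∈ Dᶜ.powerset, (D ∪ T).card = D.card + T.card := by
    intro T hT
    simp only [Finset.mem_powerset] at hT
    apply Finset.card_union_of_disjoint
    rw [Finset.disjoint_left]
    intro x hx hxT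
    exact (Finset.mem_compl.mp (hT hxT)) hx
  have h3 : ∑ T ∈ Dᶜ.powerset, (-1 : ℚ) ^ (D ∪ T).card
      = (-1 : ℚ) ^ D.card * ∑ T ∈ Dᶜ.powerset, (-1 : ℚ) ^ T.card := by
    rw [Finset.mul_sum]
    apply Finset.sum_congr rfl
    intro T hT
    rw [hdisj T hT, pow_add]
  have h4 : ∑ T ∈ Dᶜ.powerset, (-1 : ℚ) ^ T.card = 0 := by
    have hne : Dᶜ.Nonempty := by
      rw [Finset.nonempty_iff_ne_empty]
      intro h
      exact hD (by simpa using congrArg compl h)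
    have h := Finset.sum_powerset_neg_one_pow_card_of_nonempty (x := Dᶜ) hne
    have h' := congrArg (fun z : ℤ => (z : ℚ)) h
    push_cast at h'
    exact h'
  rw [h1, h2, h3, h4, mul_zero]

lemma degLE_alternating_sum_zero {k : ℕ} {F : Finset (Fin N) → ℚ} (hF : DegLE N k F)
    (hk : k < N) : ∑ S : Finset (Fin N), (-1 : ℚ) ^ S.card * F S = 0 := by
  obtain ⟨c, hc, he⟩ := hF
  calc ∑ S : Finset (Fin N), (-1 : ℚ) ^ S.card * F S
      = ∑ S : Finset (Fin N), ∑ D : Finset (Fin N), c D * ((-1 : ℚ) ^ S.card * chi D S) := by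
        apply Finset.sum_congr rfl; intro S _
        rw [he S, Finset.mul_sum]; apply Finset.sum_congr rfl; intro D _; ring
    _ = ∑ D : Finset (Fin N), c D * ∑ S : Finset (Fin N), (-1 : ℚ) ^ S.card * chi D S := by
        rw [Finset.sum_comm]
        apply Finset.sum_congr rfl; intro D _
        rw [Finset.mul_sum]
    _ = 0 := by
        apply Finset.sum_eq_zero
        intro D _
        by_cases hD : k < D.card
        · rw [hc D hD, zero_mul]
        · rw [sum_chi_zero, mul_zero]
          intro h
          have : D.card = N := by rw [h, Finset.card_univ, Fintype.card_fin]
          omega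


lemma ascFactorial_eq_prod (a : ℕ) : ∀ k, (a + 1).ascFactorial k = ∏ i ∈ Finset.range k, (a + 1 + i)
  | 0 => by simp
  | k + 1 => by
      rw [Nat.ascFactorial_succ, Finset.prod_range_succ, ← ascFactorial_eq_prod a k]
      ring

lemma choose_cast_eq (q a : ℕ) :
    (((a + (q - 1)).choose (q - 1) : ℕ) : ℚ)
      = ((Nat.factorial (q - 1) : ℚ))⁻¹ * ∏ i ∈ Finset.range (q - 1), ((a : ℚ) + 1 + i) := by
  have h := Nat.ascFactorial_eq_factorial_mul_choose a (q - 1)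
  rw [ascFactorial_eq_prod] at h
  have hcast := congrArg (fun z : ℕ => (z : ℚ)) h
  push_cast at hcast
  rw [hcast, inv_mul_cancel_left₀]
  exact_mod_cast (Nat.factorial_pos (q - 1)).ne'

lemma prime_dvd_choose_of_not_dvd {p v a : ℕ} (hp : p.Prime) (hv : 1 ≤ v) (ha : ¬ p ^ v ∣ a) :
    p ∣ (a + (p ^ v - 1)).choose (p ^ v - 1) := by
  classical
  have hq1 : 1 ≤ p ^ v := Nat.one_le_pow _ _ hp.pos
  have ha0 : a ≠ 0 := fun h => ha (h ▸ dvd_zero _)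
  have ha0' : 1 ≤ a := Nat.one_le_iff_ne_zero.mpr ha0
  set n := a + (p ^ v - 1) with hn
  have hkn : p ^ v - 1 ≤ n := Nat.le_add_left _ _
  have hb : Nat.log p n < Nat.log p n + 1 := Nat.lt_succ_self _
  have hmul := Nat.Prime.emultiplicity_choose hp hkn hb
  have hvmem : v ∈ (Finset.Ico 1 (Nat.log p n + 1)).filter
      (fun i => p ^ i ≤ (p ^ v - 1) % p ^ i + (n - (p ^ v - 1)) % p ^ i) := by
    have hnk : n - (p ^ v - 1) = a := by omega
    rw [Finset.mem_filter, Finset.mem_Ico]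
    have hmod1 : (p ^ v - 1) % p ^ v = p ^ v - 1 := Nat.mod_eq_of_lt (by omega)
    have hmod2 : a % p ^ v ≠ 0 := by
      rw [Nat.dvd_iff_mod_eq_zero] at ha; exact ha
    refine ⟨⟨hv, ?_⟩, ?_⟩
    · have hpn : p ^ v ≤ n := by omega
      have := (Nat.le_log_iff_pow_le hp.one_lt (by omega)).mpr hpn
      omega
    · rw [hnk, hmod1]
      omega
  have hne : emultiplicity p (n.choose (p ^ v - 1)) ≠ 0 := by
    rw [hmul]
    intro h
    have hcard : ((Finset.Ico 1 (Nat.log p n + 1)).filter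
        (fun i => p ^ i ≤ (p ^ v - 1) % p ^ i + (n - (p ^ v - 1)) % p ^ i)).card = 0 := by
      exact_mod_cast h
    rw [Finset.card_eq_zero] at hcard
    rw [hcard] at hvmem
    exact absurd hvmem (Finset.notMem_empty v)
  by_contra hnd
  exact hne (emultiplicity_eq_zero.mpr hnd)


/-- elementary symmetric sum of `a` over `m`-subsets of `S`. -/
def Efun {N : ℕ} (m : ℕ) (a : Fin N → ℕ) (S : Finset (Fin N)) : ℕ :=
  ∑ T ∈ S.powersetCard m, ∏ i ∈ T, a i

def Gfun {N : ℕ} (m q1 q2 : ℕ) (a : Fin N → ℕ) (S : Finset (Fin N)) : ℕ :=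
  (Efun m a S + (q1 - 1)).choose (q1 - 1) * (S.card + (q2 - 1)).choose (q2 - 1)

lemma powersetCard_eq_filter_univ {N m : ℕ} (S : Finset (Fin N)) :
    S.powersetCard m = (univ : Finset (Finset (Fin N))).filter
      (fun D => D.card = m ∧ D ⊆ S) := by
  ext T
  simp [Finset.mem_powersetCard, and_comm]

lemma Efun_degLE {N : ℕ} (m : ℕ) (a : Fin N → ℕ) :
    DegLE N m (fun S => (Efun m a S : ℚ)) := by
  classical
  refine ⟨fun T => if T.card = m then ∏ i ∈ T, (a i : ℚ) else 0, ?_, ?_⟩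
  · intro D h; dsimp only; rw [if_neg]; omega
  · intro S
    dsimp only
    have h0 : ((Efun m a S : ℕ) : ℚ) = ∑ T ∈ S.powersetCard m, ∏ i ∈ T, (a i : ℚ) := by
      rw [Efun]; push_cast; rfl
    rw [h0, powersetCard_eq_filter_univ, Finset.sum_filter]
    apply Finset.sum_congr rfl
    intro D _
    by_cases h1 : D.card = m <;> by_cases h2 : D ⊆ S <;> simp [chi, h1, h2]

lemma card_degLE {N : ℕ} : DegLE N 1 (fun S => (S.card : ℚ)) := by
  classical
  refine ⟨fun D => if D.card = 1 then 1 else 0, ?_, ?_⟩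
  · intro D h; dsimp only; rw [if_neg]; omega
  · intro S
    dsimp only
    have h0 : ((S.card : ℕ) : ℚ) = ∑ T ∈ S.powersetCard 1, (1 : ℚ) := by
      rw [Finset.sum_const, Finset.card_powersetCard, Nat.choose_one_right, nsmul_eq_mul, mul_one]
    rw [h0, powersetCard_eq_filter_univ, Finset.sum_filter]
    apply Finset.sum_congr rfl
    intro D _
    by_cases h1 : D.card = 1 <;> by_cases h2 : D ⊆ S <;> simp [chi, h1, h2]

lemma Gfun_degLE {N : ℕ} (m q1 q2 : ℕ) (a : Fin N → ℕ) :
    DegLE N ((q1 - 1) * m + (q2 - 1) * 1) (fun S => (Gfun m q1 q2 a S : ℚ)) := by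
  classical
  have h1 : DegLE N ((q1 - 1) * m)
      (fun S => ∏ i ∈ Finset.range (q1 - 1), ((Efun m a S : ℚ) + 1 + i)) := by
    have h := degLE_prod (Finset.range (q1 - 1))
      (fun i S => (Efun m a S : ℚ) + 1 + i) (fun i _ =>
        degLE_congr (fun S => by ring) ((Efun_degLE m a).add (degLE_const ((1 : ℚ) + i))))
    rwa [Finset.card_range] at h
  have h2 : DegLE N ((q2 - 1) * 1)
      (fun S => ∏ i ∈ Finset.range (q2 - 1), ((S.card : ℚ) + 1 + i)) := by
    have h := degLE_prod (Finset.range (q2 - 1))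
      (fun i S => (S.card : ℚ) + 1 + i) (fun i _ =>
        degLE_congr (fun S => by ring) ((card_degLE (N := N)).add (degLE_const ((1 : ℚ) + i))))
    rwa [Finset.card_range] at h
  refine degLE_congr (fun S => ?_) ((h1.smul (((q1 - 1).factorial : ℚ))⁻¹).mul
    (h2.smul (((q2 - 1).factorial : ℚ))⁻¹))
  rw [Gfun, Nat.cast_mul, choose_cast_eq, choose_cast_eq]

/-- Core Schauz–Brink-type existence statement. -/
lemma exists_good_subset {N : ℕ} (p : ℕ) (hp : p.Prime) (s r m : ℕ)
    (hs : 1 ≤ s) (hr : 1 ≤ r) (hm : 1 ≤ m) (a : Fin N → ℕ)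
    (hdeg : (p ^ s - 1) * m + (p ^ r - 1) * 1 < N) :
    ∃ S : Finset (Fin N), S ≠ ∅ ∧ p ^ s ∣ Efun m a S ∧ p ^ r ∣ S.card := by
  classical
  haveI : Fact p.Prime := ⟨hp⟩
  have hsumQ : ∑ S : Finset (Fin N), (-1 : ℚ) ^ S.card * (Gfun m (p ^ s) (p ^ r) a S : ℚ) = 0 :=
    degLE_alternating_sum_zero (Gfun_degLE m (p ^ s) (p ^ r) a) hdeg
  have hsumZ : ∑ S : Finset (Fin N), (-1 : ℤ) ^ S.card * (Gfun m (p ^ s) (p ^ r) a S : ℤ) = 0 := by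
    exact_mod_cast hsumQ
  have hsumP : ∑ S : Finset (Fin N), (-1 : ZMod p) ^ S.card
      * (Gfun m (p ^ s) (p ^ r) a S : ZMod p) = 0 := by
    have h := congrArg (fun z : ℤ => (z : ZMod p)) hsumZ
    push_cast at h
    exact h
  by_contra hcon
  push_neg at hcon
  have hvanish : ∀ S : Finset (Fin N), S ≠ ∅ → (Gfun m (p ^ s) (p ^ r) a S : ZMod p) = 0 := by
    intro S hS
    have hdvd : p ∣ Gfun m (p ^ s) (p ^ r) a S := by
      by_cases h1 : p ^ s ∣ Efun m a S
      · exact Dvd.dvd.mul_left (prime_dvd_choose_of_not_dvd hp hr (hcon S (Finset.nonempty_iff_ne_empty.mpr hS) h1)) _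
      · exact Dvd.dvd.mul_right (prime_dvd_choose_of_not_dvd hp hs h1) _
    rw [ZMod.natCast_eq_zero_iff]
    exact hdvd
  have hE0 : Efun m a (∅ : Finset (Fin N)) = 0 := by
    rw [Efun]
    apply Finset.sum_eq_zero
    intro T hT
    rw [Finset.mem_powersetCard] at hT
    have h1 := Finset.card_le_card hT.1
    rw [Finset.card_empty] at h1
    omega
  have hG0 : Gfun m (p ^ s) (p ^ r) a (∅ : Finset (Fin N)) = 1 := by
    rw [Gfun, hE0, Finset.card_empty, Nat.zero_add, Nat.zero_add, Nat.choose_self,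
      Nat.choose_self, mul_one]
  rw [Finset.sum_eq_single (∅ : Finset (Fin N))
    (fun S _ hS => by rw [hvanish S hS, mul_zero])
    (fun h => absurd (Finset.mem_univ _) h)] at hsumP
  rw [Finset.card_empty, pow_zero, one_mul, hG0, Nat.cast_one] at hsumP
  exact one_ne_zero hsumP

end SBaux

/-- The `m`-th elementary symmetric expression of the subsequence of `g` selected
by the index set `J`. -/
def eSym {n : ℕ} {R : Type*} [CommRing R] (m : ℕ) (g : Fin n → R) (J : Finset (Fin n)) : R :=
  ∑ T ∈ J.powersetCard m, ∏ i ∈ T, g i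

theorem stmt_11 (p : ℕ) (hp : p.Prime) (r s m : ℕ) (hs : 1 ≤ s) (hsr : s ≤ r) (hm : 1 ≤ m)
    (hbig : m * p ^ s - m < p ^ r) (n : ℕ) (hn : p ^ r + m * p ^ s - m ≤ n)
    (g : Fin n → ZMod (p ^ s)) :
    ∃ J : Finset (Fin n), J.card = p ^ r ∧ eSym m g J = 0 := by
  classical
  haveI : Fact p.Prime := ⟨hp⟩
  haveI : NeZero (p ^ s) := ⟨pow_ne_zero s hp.pos.ne'⟩
  set N : ℕ := p ^ r + m * p ^ s - m with hNdef
  have hq1 : 1 ≤ p ^ s := Nat.one_le_pow _ _ hp.pos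
  have hq2 : 1 ≤ p ^ r := Nat.one_le_pow _ _ hp.pos
  have hmm : m ≤ m * p ^ s := Nat.le_mul_of_pos_right m (by omega)
  have hN : N = p ^ r + (m * p ^ s - m) := by omega
  let e : Fin N ↪ Fin n := Fin.castLEEmb hn
  let a : Fin N → ℕ := fun i => (g (e i)).val
  have hdeg_lt : (p ^ s - 1) * m + (p ^ r - 1) * 1 < N := by
    have h1 : (p ^ s - 1) * m = m * p ^ s - m := by
      rw [Nat.sub_mul, one_mul, mul_comm (p ^ s) m]
    omega
  obtain ⟨S, hSne, hSE, hScard⟩ :=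
    SBaux.exists_good_subset p hp s r m hs (le_trans hs hsr) hm a hdeg_lt
  have hcard_le : S.card ≤ N := le_trans (Finset.card_le_univ S) (by simp)
  have hcard_pos : 0 < S.card := Finset.card_pos.mpr (Finset.nonempty_iff_ne_empty.mpr hSne)
  have hNlt : N < 2 * p ^ r := by omega
  have hScard_eq : S.card = p ^ r := by
    obtain ⟨t, ht⟩ := hScard
    rcases t with _ | _ | t
    · rw [Nat.mul_zero] at ht; omega
    · rw [Nat.mul_one] at ht; exact ht
    · exfalso
      have h2 : p ^ r * 2 ≤ p ^ r * (t + 1 + 1) := Nat.mul_le_mul_left _ (by omega)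
      omega
  refine ⟨S.map e, by rw [Finset.card_map, hScard_eq], ?_⟩
  have heq : eSym m g (S.map e) = ((SBaux.Efun m a S : ℕ) : ZMod (p ^ s)) := by
    rw [eSym, Finset.powersetCard_map, Finset.sum_map, SBaux.Efun]
    push_cast
    apply Finset.sum_congr rfl
    intro T hT
    simp only [RelEmbedding.coe_toEmbedding, Finset.mapEmbedding_apply]
    rw [Finset.prod_map]
    apply Finset.prod_congr rfl
    intro i _
    exact (ZMod.natCast_zmod_val (g (e i))).symm
  rw [heq, ZMod.natCast_eq_zero_iff]
  exact hSE
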